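/- For every fixed window size w, the probability that the segregation process on the ring of n nodes eventually reaches a frozen configuration (a configuration from which no further swaps are possible) converges to 1 as n tends to infinity. -/

import Mathlib

open MeasureTheory ProbabilityTheory
open scoped ENNReal NNReal

namespace Schelling

/-- Labels: `true` = type `x`, `false` = type `o`.
A configuration on the ring of `n` nodes assigns a label to each node. -/
abbrev Config (n : ℕ) := ZMod n → Bool

/-- The ±1 value of a label: `x ↦ +1`, `o ↦ -1`. -/
def xval (b : Bool) : ℤ := if b then 1 else -1

/-- A node `i` is happy (tolerance τ = 1/2) if at least `w` of its `2w` nearest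
neighbours `i ± 1, …, i ± w` carry the same label as `i`. -/
def happy (w : ℕ) {n : ℕ} (c : Config n) (i : ZMod n) : Prop :=
  w ≤ ∑ k ∈ Finset.Icc 1 w,
      ((if c (i + (k : ZMod n)) = c i then 1 else 0) +
       (if c (i - (k : ZMod n)) = c i then 1 else 0))

instance (w : ℕ) {n : ℕ} (c : Config n) (i : ZMod n) : Decidable (happy w c i) :=
  Nat.decLe _ _

/-- The result of exchanging the labels of nodes `i` and `j`. -/
def doSwap {n : ℕ} (c : Config n) (i j : ZMod n) : Config n :=
  Function.update (Function.update c i (c j)) j (c i)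

/-- One step of the dynamics: the proposed pair `p` swaps labels iff both nodes are
unhappy and carry opposite labels. -/
def swapStep (w : ℕ) {n : ℕ} (c : Config n) (p : ZMod n × ZMod n) : Config n :=
  if ¬ happy w c p.1 ∧ ¬ happy w c p.2 ∧ c p.1 ≠ c p.2 then doSwap c p.1 p.2 else c

/-- The trajectory of the segregation process started from `c0`, where `pr t` is the
pair of nodes proposed for a swap at time `t`. -/
def traj (w : ℕ) {n : ℕ} (c0 : Config n) (pr : ℕ → ZMod n × ZMod n) : ℕ → Config n
  | 0 => c0
  | t + 1 => swapStep w (traj w c0 pr t) (pr t)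

/-- A configuration is frozen if it contains no pair of unhappy, oppositely labeled
nodes, so that no further swaps are possible. -/
def Frozen (w : ℕ) {n : ℕ} (c : Config n) : Prop :=
  ∀ i j : ZMod n, ¬(¬ happy w c i ∧ ¬ happy w c j ∧ c i ≠ c j)

/-- `c'` is obtained from `c` by one legal swap: two distinct unhappy, oppositely
labeled nodes exchange labels. -/
def LegalSwap (w : ℕ) {n : ℕ} (c c' : Config n) : Prop :=
  ∃ i j : ZMod n, i ≠ j ∧ ¬ happy w c i ∧ ¬ happy w c j ∧ c i ≠ c j ∧ c' = doSwap c i j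

/-- The block of `len` consecutive nodes starting at `s` is monochromatic. -/
def MonochromaticBlock {n : ℕ} (c : Config n) (s : ZMod n) (len : ℕ) : Prop :=
  ∀ k < len, c (s + (k : ZMod n)) = c s

/-- A firewall is a monochromatic block of at least `w + 1` consecutive nodes. -/
def HasFirewall (w : ℕ) {n : ℕ} (c : Config n) : Prop :=
  ∃ (s : ZMod n) (len : ℕ), w + 1 ≤ len ∧ MonochromaticBlock c s len

/-- Node `i` belongs to some firewall of `c`. -/
def InFirewall (w : ℕ) {n : ℕ} (c : Config n) (i : ZMod n) : Prop :=
  ∃ (s : ZMod n) (len : ℕ), w + 1 ≤ len ∧ MonochromaticBlock c s len ∧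
    ∃ k < len, i = s + (k : ZMod n)

instance (n : ℕ) : MeasurableSpace (ZMod n) := ⊤

/-- The uniform probability measure on a finite set `s`. -/
noncomputable def uniformOn {α : Type*} [MeasurableSpace α] (s : Finset α) : Measure α :=
  (s.card : ℝ≥0∞)⁻¹ • ∑ a ∈ s, Measure.dirac a

/-- Unordered proposals are modeled as ordered pairs of distinct nodes. -/
def distinctPairs (n : ℕ) [NeZero n] : Finset (ZMod n × ZMod n) :=
  Finset.univ.filter fun p => p.1 ≠ p.2

/-- The uniform distribution of the initial configuration. -/
noncomputable def configMeasure (n : ℕ) [NeZero n] : Measure (Config n) :=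
  uniformOn (Finset.univ : Finset (Config n))

/-- The uniform distribution of a proposed pair. -/
noncomputable def pairMeasure (n : ℕ) [NeZero n] : Measure (ZMod n × ZMod n) :=
  uniformOn (distinctPairs n)

/-- `(init, prop)` is a realization of the segregation process randomness: for every
finite horizon `T`, the initial configuration together with the first `T` proposals is
distributed as (uniform configuration) × (i.i.d. uniform distinct pairs). -/
def IsSchellingProcess (n : ℕ) [NeZero n] {Ω : Type*} [MeasurableSpace Ω]
    (μ : Measure Ω) (init : Ω → Config n) (prop : ℕ → Ω → ZMod n × ZMod n) : Prop :=
  ∀ T : ℕ, Measure.map (fun ω => (init ω, fun t : Fin T => prop t ω)) μ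
      = (configMeasure n).prod (Measure.pi fun _ : Fin T => pairMeasure n)

/-- The x-bias of node `i`: the sum of the ±1 values over the window `i - w, …, i + w`. -/
def bias (w : ℕ) {n : ℕ} (c : Config n) (i : ZMod n) : ℤ :=
  xval (c i) + ∑ k ∈ Finset.Icc 1 w,
    (xval (c (i + (k : ZMod n))) + xval (c (i - (k : ZMod n))))

/-- An x-firewall incubator: a block `F` of `len` consecutive nodes starting at `s`,
made of a left defender (first `w+1` nodes), an internal block, and a right defender
(last `w+1` nodes), such that every node of `F` has x-bias `> √w`, the minimum bias on
the left defender is attained at its left endpoint, and the minimum bias on the right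
defender is attained at its right endpoint. -/
def IsIncubator (w : ℕ) {n : ℕ} (c : Config n) (s : ZMod n) (len : ℕ) : Prop :=
  2 * (w + 1) ≤ len ∧
  (∀ k < len, Real.sqrt w < ((bias w c (s + (k : ZMod n)) : ℤ) : ℝ)) ∧
  (∀ k < w + 1, bias w c s ≤ bias w c (s + (k : ZMod n))) ∧
  (∀ k < w + 1,
    bias w c (s + ((len - 1 : ℕ) : ZMod n)) ≤ bias w c (s + ((len - 1 - k : ℕ) : ZMod n)))

/-- The sum of the first `j` entries of a ±1 sequence. -/
def chiPrefix {m : ℕ} (B : Fin m → Bool) (j : ℕ) : ℤ :=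
  ∑ i : Fin m, if (i : ℕ) < j then xval (B i) else 0

/-- The total sum of a ±1 sequence. -/
def chi {m : ℕ} (B : Fin m → Bool) : ℤ := ∑ i : Fin m, xval (B i)

/-- The sum of the last `j` entries of a ±1 sequence. -/
def chiSuffix {m : ℕ} (B : Fin m → Bool) (j : ℕ) : ℤ :=
  ∑ i : Fin m, if m - j ≤ (i : ℕ) then xval (B i) else 0

/-- A sequence `B ∈ {±1}^w` is x-promoting if `χ(B) ≥ 5√w` and for all `1 ≤ j ≤ w`,
`χ_j(B) > -2√w` and `χ_{-j}(B) > -2√w`. -/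
def XPromoting (w : ℕ) (B : Fin w → Bool) : Prop :=
  5 * Real.sqrt w ≤ ((chi B : ℤ) : ℝ) ∧
  ∀ j : ℕ, 1 ≤ j → j ≤ w →
    (-2) * Real.sqrt w < ((chiPrefix B j : ℤ) : ℝ) ∧
    (-2) * Real.sqrt w < ((chiSuffix B j : ℤ) : ℝ)

/-- The concatenation of the three length-`w` sequences `B, B', B''`, as a function on
positions `0, …, 3w - 1`. -/
def concat3 (w : ℕ) (B B' B'' : Fin w → Bool) (i : ℕ) : Bool :=
  if h : i < w then B ⟨i, h⟩
  else if h' : i < 2 * w then B' ⟨i - w, by omega⟩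
  else if h'' : i < 3 * w then B'' ⟨i - 2 * w, by omega⟩
  else false

/-- The sign sequences of length `a + b` containing exactly `a` entries `+1`
(i.e. `true`) and `b` entries `-1` (i.e. `false`). -/
def ballotSeqs (a b : ℕ) : Finset (Fin (a + b) → Bool) :=
  Finset.univ.filter fun f => (Finset.univ.filter fun i => f i = true).card = a

/-- Node `i` is, at time `t`, selected to participate in a proposed swap together with
an unhappy, oppositely labeled node. -/
def selectedWith (w : ℕ) {n : ℕ} (c0 : Config n) (pr : ℕ → ZMod n × ZMod n)
    (i : ZMod n) (t : ℕ) : Prop :=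
  ((pr t).1 = i ∧ ¬ happy w (traj w c0 pr t) (pr t).2 ∧
      traj w c0 pr t (pr t).2 ≠ traj w c0 pr t i) ∨
  ((pr t).2 = i ∧ ¬ happy w (traj w c0 pr t) (pr t).1 ∧
      traj w c0 pr t (pr t).1 ≠ traj w c0 pr t i)

/-- The satisfaction time of node `i`: the first time at which `i` is selected in a
proposed swap together with an unhappy, oppositely labeled node (`∞` if never). -/
noncomputable def satTime (w : ℕ) {n : ℕ} (c0 : Config n) (pr : ℕ → ZMod n × ZMod n)
    (i : ZMod n) : ℕ∞ :=
  sInf {t : ℕ∞ | ∃ t' : ℕ, t = (t' : ℕ∞) ∧ selectedWith w c0 pr i t'}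

/-- Node `i` is impatient at time `t` if it is unhappy at time `t` and `t ≤ t*_i`. -/
def Impatient (w : ℕ) {n : ℕ} (c0 : Config n) (pr : ℕ → ZMod n × ZMod n)
    (i : ZMod n) (t : ℕ) : Prop :=
  ¬ happy w (traj w c0 pr t) i ∧ (t : ℕ∞) ≤ satTime w c0 pr i

/-- The left combatants of the block starting at `s`: the nodes of the left attacker
`A_L = {s - w, …, s - 1}` initially labeled `x`, together with the nodes of the left
defender `D_L = {s, …, s + w}` initially labeled `o`. -/
def leftCombatants (w : ℕ) {n : ℕ} [NeZero n] (c0 : Config n) (s : ZMod n) :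
    Finset (ZMod n) :=
  ((Finset.Icc 1 w).image fun k : ℕ => s - (k : ZMod n)).filter (fun i => c0 i = true) ∪
  ((Finset.range (w + 1)).image fun k : ℕ => s + (k : ZMod n)).filter (fun i => c0 i = false)

/-- The right combatants of the block of length `len` starting at `s`: the nodes of the
right attacker `A_R = {s + len, …, s + len + w - 1}` initially labeled `x`, together
with the nodes of the right defender `D_R = {s + len - 1 - w, …, s + len - 1}` initially
labeled `o`. -/
def rightCombatants (w : ℕ) {n : ℕ} [NeZero n] (c0 : Config n) (s : ZMod n) (len : ℕ) :
    Finset (ZMod n) :=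
  ((Finset.range w).image fun k : ℕ => s + ((len + k : ℕ) : ZMod n)).filter
      (fun i => c0 i = true) ∪
  ((Finset.range (w + 1)).image fun k : ℕ => s + ((len - 1 - k : ℕ) : ZMod n)).filter
      (fun i => c0 i = false)

/-- `l` is a pseudo-transcript of the combatant set `C` relative to time `t0`: it
enumerates `C` without repetitions, all combatants with satisfaction time `> t0` come
first (in an arbitrary order, corresponding to an arbitrary permutation of their
signs), and the remaining combatants are listed in decreasing order of satisfaction
time. -/
def IsPseudoTranscript (w : ℕ) {n : ℕ} (c0 : Config n) (pr : ℕ → ZMod n × ZMod n)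
    (t0 : ℕ) (C : Finset (ZMod n)) (l : List (ZMod n)) : Prop :=
  l.Nodup ∧ l.toFinset = C ∧
  ∀ p q : Fin l.length, (p : ℕ) < (q : ℕ) →
    ((t0 : ℕ∞) < satTime w c0 pr (l.get q) → (t0 : ℕ∞) < satTime w c0 pr (l.get p)) ∧
    (satTime w c0 pr (l.get q) ≤ (t0 : ℕ∞) → satTime w c0 pr (l.get p) ≤ (t0 : ℕ∞) →
      satTime w c0 pr (l.get q) ≤ satTime w c0 pr (l.get p))

/-- All partial sums of the sign sequence associated to the list `l` (where each node
contributes the ±1 value of its initial label) are nonnegative. -/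
def NonnegPartialSums {n : ℕ} (c0 : Config n) (l : List (ZMod n)) : Prop :=
  ∀ m ≤ l.length, 0 ≤ ((l.take m).map fun i => xval (c0 i)).sum

/-- Nodes `i` and `j` belong to the same monochromatic run of `c`. -/
def sameRun {n : ℕ} (c : Config n) (i j : ZMod n) : Prop :=
  ∃ k : ℕ, ((j = i + (k : ZMod n)) ∧ ∀ m ≤ k, c (i + (m : ZMod n)) = c i) ∨
           ((j = i - (k : ZMod n)) ∧ ∀ m ≤ k, c (i - (m : ZMod n)) = c i)

/-- The length of the monochromatic run of `c` containing node `i`. -/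
noncomputable def runLength {n : ℕ} (c : Config n) (i : ZMod n) : ℕ :=
  Nat.card {j : ZMod n // sameRun c i j}

/-- The number of unhappy nodes with label `b`. -/
noncomputable def unhappyCount (w : ℕ) {n : ℕ} (c : Config n) (b : Bool) : ℕ :=
  Nat.card {i : ZMod n // c i = b ∧ ¬ happy w c i}

/-- The number of impatient nodes at time `t`. -/
noncomputable def impatientCount (w : ℕ) {n : ℕ} (c0 : Config n)
    (pr : ℕ → ZMod n × ZMod n) (t : ℕ) : ℕ :=
  Nat.card {i : ZMod n // Impatient w c0 pr i t}

/-- The absolute difference between the numbers of unhappy `x`'s and unhappy `o`'s. -/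
noncomputable def unhappyImbalance (w : ℕ) {n : ℕ} (c : Config n) : ℝ :=
  |(unhappyCount w c true : ℝ) - (unhappyCount w c false : ℝ)|

/-- The earliest time at which fewer than `bound` nodes are impatient (`∞` if never). -/
noncomputable def firstFewImpatient (w : ℕ) {n : ℕ} (c0 : Config n)
    (pr : ℕ → ZMod n × ZMod n) (bound : ℝ) : ℕ∞ :=
  sInf {t : ℕ∞ | ∃ t' : ℕ, t = (t' : ℕ∞) ∧ (impatientCount w c0 pr t' : ℝ) < bound}

/-- The earliest time at which the numbers of unhappy `x`'s and unhappy `o`'s differ by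
more than `bound` (`∞` if never). -/
noncomputable def firstImbalance (w : ℕ) {n : ℕ} (c0 : Config n)
    (pr : ℕ → ZMod n × ZMod n) (bound : ℝ) : ℕ∞ :=
  sInf {t : ℕ∞ | ∃ t' : ℕ, t = (t' : ℕ∞) ∧ bound < unhappyImbalance w (traj w c0 pr t')}

/-- In the disjoint-cycles graph `G` (cycles of length `L`), the node reached from `i`
by moving `k` steps forward inside `i`'s cycle. -/
def gnbr (L : ℕ) {n : ℕ} (i : ZMod n) (k : ℕ) : ZMod n :=
  (((i.val / L) * L + ((i.val % L + k) % L) : ℕ) : ZMod n)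

/-- Happiness with respect to the disjoint-cycles graph `G`. -/
def ghappy (w L : ℕ) {n : ℕ} (c : Config n) (i : ZMod n) : Prop :=
  w ≤ ∑ k ∈ Finset.Icc 1 w,
      ((if c (gnbr L i k) = c i then 1 else 0) +
       (if c (gnbr L i (L - k)) = c i then 1 else 0))

instance (w L : ℕ) {n : ℕ} (c : Config n) (i : ZMod n) : Decidable (ghappy w L c i) :=
  Nat.decLe _ _

/-- One step of the segregation dynamics on the disjoint-cycles graph `G`. -/
def gswapStep (w L : ℕ) {n : ℕ} (c : Config n) (p : ZMod n × ZMod n) : Config n :=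
  if ¬ ghappy w L c p.1 ∧ ¬ ghappy w L c p.2 ∧ c p.1 ≠ c p.2 then doSwap c p.1 p.2 else c

/-- The trajectory of the process on `G`, coupled with the ring process by using the
same initial configuration and the same proposed pairs. -/
def gtraj (w L : ℕ) {n : ℕ} (c0 : Config n) (pr : ℕ → ZMod n × ZMod n) : ℕ → Config n
  | 0 => c0
  | t + 1 => gswapStep w L (gtraj w L c0 pr t) (pr t)

/-- The set of nodes within `w` steps of `i` in either graph (including `i`). -/
def nbhd (w L : ℕ) {n : ℕ} (i : ZMod n) : Set (ZMod n) :=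
  {j | ∃ k ≤ w, j = i + (k : ZMod n) ∨ j = i - (k : ZMod n) ∨
        j = gnbr L i k ∨ j = gnbr L i (L - k)}

open Classical in
/-- The tainted set `D(t)`: initially the nodes whose residue mod `L` lies in
`{-w+1, …, w-1}`; whenever a proposed pair touches a tainted node, all nodes within `w`
steps (in either graph) of either member of the pair become tainted. -/
noncomputable def tainted (w L : ℕ) {n : ℕ} (pr : ℕ → ZMod n × ZMod n) :
    ℕ → Set (ZMod n)
  | 0 => {i | i.val % L < w ∨ L - w < i.val % L}
  | t + 1 =>
      if (pr t).1 ∈ tainted w L pr t ∨ (pr t).2 ∈ tainted w L pr t then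
        tainted w L pr t ∪ nbhd w L (pr t).1 ∪ nbhd w L (pr t).2
      else tainted w L pr t



def ev {n : ℕ} (c : Config n) (a b : ZMod n) : ℤ := if c a = c b then 1 else -1
lemma ev_symm {n} (c : Config n) (a b : ZMod n) : ev c a b = ev c b a := by simp [ev, eq_comm]
lemma ev_le_one {n} (c : Config n) (a b : ZMod n) : ev c a b ≤ 1 := by
  unfold ev; split <;> norm_num
lemma neg_one_le_ev {n} (c : Config n) (a b : ZMod n) : -1 ≤ ev c a b := by
  unfold ev; split <;> norm_num
lemma ev_flip_right {n} (c c' : Config n) (a b : ZMod n) (h1 : c' a = c a) (h2 : c' b = !c b) :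
    ev c' a b = - ev c a b := by
  simp only [ev, h1, h2]; cases c a <;> cases c b <;> simp
lemma ev_flip_left {n} (c c' : Config n) (a b : ZMod n) (h1 : c' a = !c a) (h2 : c' b = c b) :
    ev c' a b = - ev c a b := by
  simp only [ev, h1, h2]; cases c a <;> cases c b <;> simp
lemma cast_ne_zero_of {n w : ℕ} (hn : 2 * w < n) {a : ℕ} (h1 : 1 ≤ a) (h2 : a ≤ 2 * w) :
    (a : ZMod n) ≠ 0 := by
  haveI : NeZero n := ⟨by omega⟩
  intro h
  rw [ZMod.natCast_eq_zero_iff] at h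
  have := Nat.le_of_dvd (by omega) h; omega

section KeyLemma
variable {n w : ℕ}

lemma key_sum (hn : 2 * w < n) [NeZero n] (c : Config n) {u v : ZMod n} (hc : c u ≠ c v)
    {k : ℕ} (hk : k ∈ Finset.Icc 1 w) :
    -2 * ((ev c u (u + (k : ZMod n)) + ev c u (u - (k : ZMod n))) +
          (ev c v (v + (k : ZMod n)) + ev c v (v - (k : ZMod n)))) -
      (if v = u + (k : ZMod n) ∨ v = u - (k : ZMod n) then 4 else 0)
    ≤ (∑ i : ZMod n, ev (doSwap c u v) i (i + (k : ZMod n))) -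
        ∑ i : ZMod n, ev c i (i + (k : ZMod n)) := by
  obtain ⟨hk1, hk2⟩ := Finset.mem_Icc.mp hk
  have huv : u ≠ v := fun h => hc (by rw [h])
  set κ : ZMod n := (k : ZMod n) with hκdef
  set c' : Config n := doSwap c u v with hc'def
  have hκ0 : κ ≠ 0 := cast_ne_zero_of hn hk1 (by omega)
  have h2κ : κ + κ ≠ 0 := by
    have : ((k + k : ℕ) : ZMod n) ≠ 0 := cast_ne_zero_of hn (by omega) (by omega)
    simpa using this
  have hcv : c v = !c u := by cases h1 : c u <;> cases h2 : c v <;> simp_all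
  have hcu : c u = !c v := by rw [hcv]; simp
  have h'u : c' u = c v := by simp [hc'def, doSwap, Function.update_apply, huv]
  have h'v : c' v = c u := by simp [hc'def, doSwap, Function.update_apply]
  have h'x : ∀ x, x ≠ u → x ≠ v → c' x = c x := by
    intro x hxu hxv; simp [hc'def, doSwap, Function.update_apply, hxu, hxv]
  rw [← Finset.sum_sub_distrib]
  set g : ZMod n → ℤ := fun i => ev c' i (i + κ) - ev c i (i + κ) with hg
  have hg0 : ∀ i, i ≠ u → i ≠ v → i ≠ u - κ → i ≠ v - κ → g i = 0 := by
    intro i h1 h2 h3 h4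
    have e1 : c' i = c i := h'x i h1 h2
    have e2 : c' (i + κ) = c (i + κ) := by
      refine h'x _ (fun h => h3 ?_) (fun h => h4 ?_) <;> linear_combination h
    simp [hg, ev, e1, e2]
  have hgu_generic : v ≠ u + κ → g u = -2 * ev c u (u + κ) := by
    intro hB
    have e2 : c' (u + κ) = c (u + κ) := by
      refine h'x _ (fun h => hκ0 (by linear_combination h)) (fun h => hB (by linear_combination -h))
    have := ev_flip_left c c' u (u + κ) (by rw [h'u, hcv]) e2
    simp only [hg]; rw [this]; ring
  have hgv_generic : v ≠ u - κ → g v = -2 * ev c v (v + κ) := by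
    intro hC
    have e2 : c' (v + κ) = c (v + κ) := by
      refine h'x _ (fun h => hC (by linear_combination h)) (fun h => hκ0 (by linear_combination h))
    have := ev_flip_left c c' v (v + κ) (by rw [h'v, hcu]) e2
    simp only [hg]; rw [this]; ring
  have hguκ : u - κ ≠ v → g (u - κ) = -2 * ev c u (u - κ) := by
    intro h
    have e1 : c' (u - κ) = c (u - κ) :=
      h'x _ (fun h2 => hκ0 (by linear_combination -h2)) h
    have hadd : u - κ + κ = u := by ring
    have := ev_flip_right c c' (u - κ) u e1 (by rw [h'u, hcv])
    simp only [hg, hadd]; rw [this, ev_symm c u (u - κ)]; ring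
  have hgvκ : v - κ ≠ u → g (v - κ) = -2 * ev c v (v - κ) := by
    intro h
    have e1 : c' (v - κ) = c (v - κ) :=
      h'x _ h (fun h2 => hκ0 (by linear_combination -h2))
    have hadd : v - κ + κ = v := by ring
    have := ev_flip_right c c' (v - κ) v e1 (by rw [h'v, hcu])
    simp only [hg, hadd]; rw [this, ev_symm c v (v - κ)]; ring
  have hevuv : ev c u v = -1 := by simp [ev, hc]
  have hevvu : ev c v u = -1 := by simp [ev, Ne.symm hc]
  by_cases hB : v = u + κ
  · -- special case v = u + κ
    have hvκ : v - κ = u := by linear_combination hB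
    have hd3 : v ≠ u - κ := fun h => h2κ (by linear_combination h - hB)
    have hsum : ∑ i : ZMod n, g i = ∑ i ∈ ({u, v, u - κ} : Finset (ZMod n)), g i := by
      refine (Finset.sum_subset (Finset.subset_univ _) ?_).symm
      intro x _ hx
      simp only [Finset.mem_insert, Finset.mem_singleton, not_or] at hx
      exact hg0 x hx.1 hx.2.1 hx.2.2 (by rw [hvκ]; exact hx.1)
    have hgu : g u = 0 := by
      have e : u + κ = v := hB.symm
      simp only [hg, e]
      have h1 : ev c' u v = -1 := by simp [ev, h'u, h'v, Ne.symm hc]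
      rw [h1, hevuv]; ring
    have hgv : g v = -2 * ev c v (v + κ) := hgv_generic hd3
    have hguκ' : g (u - κ) = -2 * ev c u (u - κ) := hguκ (fun h => h2κ (by linear_combination -h - hB))
    have hm1 : u ∉ ({v, u - κ} : Finset (ZMod n)) := by
      simp only [Finset.mem_insert, Finset.mem_singleton, not_or]
      exact ⟨huv, fun h => hκ0 (by linear_combination h)⟩
    have hm2 : v ∉ ({u - κ} : Finset (ZMod n)) := by simpa using hd3
    rw [hsum, Finset.sum_insert hm1, Finset.sum_insert hm2, Finset.sum_singleton,
      hgu, hgv, hguκ', if_pos (Or.inl hB)]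
    have h4 : ev c u (u + κ) = -1 := by rw [← hB]; exact hevuv
    have h5 : ev c v (v - κ) = -1 := by rw [hvκ]; exact hevvu
    rw [h4, h5]; exact le_of_eq (by ring)
  · by_cases hC : v = u - κ
    · -- special case v = u - κ
      have hvκ : v + κ = u := by linear_combination hC
      have hsum : ∑ i : ZMod n, g i = ∑ i ∈ ({u, v, v - κ} : Finset (ZMod n)), g i := by
        refine (Finset.sum_subset (Finset.subset_univ _) ?_).symm
        intro x _ hx
        simp only [Finset.mem_insert, Finset.mem_singleton, not_or] at hx
        exact hg0 x hx.1 hx.2.1 (by rw [← hC]; exact hx.2.1) hx.2.2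
      have hgv : g v = 0 := by
        simp only [hg, hvκ]
        have h1 : ev c' v u = -1 := by simp [ev, h'u, h'v, hc]
        rw [h1, hevvu]; ring
      have hgu : g u = -2 * ev c u (u + κ) := hgu_generic hB
      have hgvκ' : g (v - κ) = -2 * ev c v (v - κ) :=
        hgvκ (fun h => h2κ (by linear_combination hC - h))
      have hm1 : u ∉ ({v, v - κ} : Finset (ZMod n)) := by
        simp only [Finset.mem_insert, Finset.mem_singleton, not_or]
        exact ⟨huv, fun h => h2κ (by linear_combination h + hC)⟩
      have hm2 : v ∉ ({v - κ} : Finset (ZMod n)) := by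
        simp only [Finset.mem_singleton]
        exact fun h => hκ0 (by linear_combination h)
      rw [hsum, Finset.sum_insert hm1, Finset.sum_insert hm2, Finset.sum_singleton,
        hgu, hgv, hgvκ', if_pos (Or.inr hC)]
      have h4 : ev c u (u - κ) = -1 := by rw [← hC]; exact hevuv
      have h5 : ev c v (v + κ) = -1 := by rw [hvκ]; exact hevvu
      rw [h4, h5]; exact le_of_eq (by ring)
    · -- generic case
      have hsum : ∑ i : ZMod n, g i = ∑ i ∈ ({u, v, u - κ, v - κ} : Finset (ZMod n)), g i := by
        refine (Finset.sum_subset (Finset.subset_univ _) ?_).symm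
        intro x _ hx
        simp only [Finset.mem_insert, Finset.mem_singleton, not_or] at hx
        exact hg0 x hx.1 hx.2.1 hx.2.2.1 hx.2.2.2
      have hm1 : u ∉ ({v, u - κ, v - κ} : Finset (ZMod n)) := by
        simp only [Finset.mem_insert, Finset.mem_singleton, not_or]
        exact ⟨huv, fun h => hκ0 (by linear_combination h),
          fun h => hB (by linear_combination -h)⟩
      have hm2 : v ∉ ({u - κ, v - κ} : Finset (ZMod n)) := by
        simp only [Finset.mem_insert, Finset.mem_singleton, not_or]
        exact ⟨hC, fun h => hκ0 (by linear_combination h)⟩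
      have hm3 : u - κ ∉ ({v - κ} : Finset (ZMod n)) := by
        simp only [Finset.mem_singleton]
        exact fun h => huv (by linear_combination h)
      rw [hsum, Finset.sum_insert hm1, Finset.sum_insert hm2, Finset.sum_insert hm3,
        Finset.sum_singleton, hgu_generic hB, hgv_generic hC,
        hguκ (fun h => hC h.symm), hgvκ (fun h => hB (by linear_combination h)),
        if_neg (by simp [hB, hC])]
      exact le_of_eq (by ring)

end KeyLemma

section PotLemmas
variable {n w : ℕ}

noncomputable def pot (w : ℕ) {n : ℕ} [NeZero n] (c : Config n) : ℤ :=
  ∑ k ∈ Finset.Icc 1 w, ∑ i : ZMod n, ev c i (i + (k : ZMod n))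

lemma unhappy_bias [NeZero n] {c : Config n} {u : ZMod n} (hu : ¬ happy w c u) :
    ∑ k ∈ Finset.Icc 1 w,
      (ev c u (u + (k : ZMod n)) + ev c u (u - (k : ZMod n))) ≤ -2 := by
  unfold happy at hu
  push_neg at hu
  set s : ℕ := ∑ k ∈ Finset.Icc 1 w,
      ((if c (u + (k : ZMod n)) = c u then 1 else 0) +
       (if c (u - (k : ZMod n)) = c u then 1 else 0)) with hs
  have hpt : ∀ k ∈ Finset.Icc 1 w,
      ev c u (u + (k : ZMod n)) + ev c u (u - (k : ZMod n)) =
        2 * (((if c (u + (k : ZMod n)) = c u then 1 else 0) +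
             (if c (u - (k : ZMod n)) = c u then 1 else 0) : ℕ) : ℤ) - 2 := by
    intro k _
    simp only [ev, eq_comm]
    split_ifs <;> push_cast <;> ring
  rw [Finset.sum_congr rfl hpt, Finset.sum_sub_distrib, ← Finset.mul_sum, ← Nat.cast_sum,
    Finset.sum_const, Nat.card_Icc]
  have hsw : s + 1 ≤ w := hu
  have : ((s : ℤ) + 1) ≤ (w : ℤ) := by exact_mod_cast hsw
  simp only [← hs, nsmul_eq_mul, Nat.add_sub_cancel]
  push_cast
  linarith

lemma special_le (hn : 2 * w < n) [NeZero n] {u v : ZMod n} (huv : u ≠ v) :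
    ∑ k ∈ Finset.Icc 1 w,
      (if v = u + (k : ZMod n) ∨ v = u - (k : ZMod n) then (4 : ℤ) else 0) ≤ 4 := by
  classical
  have hrw := Finset.sum_filter (s := Finset.Icc 1 w)
    (fun k : ℕ => v = u + (k : ZMod n) ∨ v = u - (k : ZMod n)) (fun _ : ℕ => (4 : ℤ))
  rw [← hrw, Finset.sum_const, nsmul_eq_mul]
  have hcard : ((Finset.Icc 1 w).filter
      (fun k : ℕ => v = u + (k : ZMod n) ∨ v = u - (k : ZMod n))).card ≤ 1 := by
    refine Finset.card_le_one.mpr ?_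
    intro a ha b hb
    simp only [Finset.mem_filter, Finset.mem_Icc] at ha hb
    obtain ⟨⟨ha1, ha2⟩, hha⟩ := ha
    obtain ⟨⟨hb1, hb2⟩, hhb⟩ := hb
    have hinj : ∀ x y : ℕ, x ≤ 2 * w → y ≤ 2 * w → (x : ZMod n) = (y : ZMod n) → x = y := by
      intro x y hx hy h
      have hx' := ZMod.val_natCast_of_lt (show x < n by omega)
      have hy' := ZMod.val_natCast_of_lt (show y < n by omega)
      rw [← hx', ← hy', h]
    have hsum : ∀ x y : ℕ, 1 ≤ x → x ≤ w → 1 ≤ y → y ≤ w →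
        (x : ZMod n) + (y : ZMod n) ≠ 0 := by
      intro x y h1 h2 h3 h4 h
      exact cast_ne_zero_of hn (a := x + y) (by omega) (by omega) (by push_cast; linear_combination h)
    rcases hha with h1 | h1 <;> rcases hhb with h2 | h2
    · exact hinj a b (by omega) (by omega) (by
        have := h1.symm.trans h2
        linear_combination this)
    · exact absurd (show ((a : ZMod n)) + (b : ZMod n) = 0 by linear_combination h1.symm.trans h2)
        (hsum a b ha1 ha2 hb1 hb2)
    · exact absurd (show ((a : ZMod n)) + (b : ZMod n) = 0 by linear_combination h2.symm.trans h1)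
        (hsum a b ha1 ha2 hb1 hb2)
    · exact hinj a b (by omega) (by omega) (by
        have := h1.symm.trans h2
        linear_combination -this)
  have : (((Finset.Icc 1 w).filter
      (fun k : ℕ => v = u + (k : ZMod n) ∨ v = u - (k : ZMod n))).card : ℤ) ≤ 1 := by
    exact_mod_cast hcard
  linarith

lemma pot_swap (hn : 2 * w < n) [NeZero n] {c : Config n} {u v : ZMod n}
    (hu : ¬ happy w c u) (hv : ¬ happy w c v) (hc : c u ≠ c v) :
    pot w c + 4 ≤ pot w (doSwap c u v) := by
  have huv : u ≠ v := fun h => hc (by rw [h])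
  have hstep : ∀ k ∈ Finset.Icc 1 w,
      -2 * ((ev c u (u + (k : ZMod n)) + ev c u (u - (k : ZMod n))) +
            (ev c v (v + (k : ZMod n)) + ev c v (v - (k : ZMod n)))) -
        (if v = u + (k : ZMod n) ∨ v = u - (k : ZMod n) then 4 else 0)
      ≤ (∑ i : ZMod n, ev (doSwap c u v) i (i + (k : ZMod n))) -
          ∑ i : ZMod n, ev c i (i + (k : ZMod n)) :=
    fun k hk => key_sum hn c hc hk
  have h1 := Finset.sum_le_sum hstep
  rw [Finset.sum_sub_distrib] at h1
  have h2 : pot w (doSwap c u v) - pot w c =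
      ∑ k ∈ Finset.Icc 1 w, ((∑ i : ZMod n, ev (doSwap c u v) i (i + (k : ZMod n))) -
        ∑ i : ZMod n, ev c i (i + (k : ZMod n))) := by
    rw [Finset.sum_sub_distrib]; rfl
  have h3 : ∑ k ∈ Finset.Icc 1 w,
      (-2 * ((ev c u (u + (k : ZMod n)) + ev c u (u - (k : ZMod n))) +
            (ev c v (v + (k : ZMod n)) + ev c v (v - (k : ZMod n))))) =
      -2 * ((∑ k ∈ Finset.Icc 1 w, (ev c u (u + (k : ZMod n)) + ev c u (u - (k : ZMod n)))) +
        ∑ k ∈ Finset.Icc 1 w, (ev c v (v + (k : ZMod n)) + ev c v (v - (k : ZMod n)))) := by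
    rw [← Finset.sum_add_distrib, Finset.mul_sum]
  rw [h3] at h1
  have hb1 := unhappy_bias (w := w) hu
  have hb2 := unhappy_bias (w := w) hv
  have hsp := special_le hn huv
  linarith [h2 ▸ h1]

lemma pot_le_bound [NeZero n] (c : Config n) : pot w c ≤ (w * n : ℕ) ∧ -((w * n : ℕ) : ℤ) ≤ pot w c := by
  constructor
  · calc pot w c ≤ ∑ k ∈ Finset.Icc 1 w, ∑ _i : ZMod n, (1 : ℤ) :=
        Finset.sum_le_sum (fun k _ => Finset.sum_le_sum (fun i _ => ev_le_one c _ _))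
      _ = (w * n : ℕ) := by
        simp only [Finset.sum_const, Finset.card_univ, ZMod.card, Nat.card_Icc,
          Nat.add_sub_cancel, nsmul_eq_mul, mul_one]
        push_cast; ring
  · have hstart : -((w * n : ℕ) : ℤ) = ∑ k ∈ Finset.Icc 1 w, ∑ _i : ZMod n, (-1 : ℤ) := by
      simp only [Finset.sum_const, Finset.card_univ, ZMod.card, Nat.card_Icc,
        Nat.add_sub_cancel, nsmul_eq_mul]
      push_cast; ring
    calc -((w * n : ℕ) : ℤ) = ∑ k ∈ Finset.Icc 1 w, ∑ _i : ZMod n, (-1 : ℤ) := hstart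
      _ ≤ pot w c :=
        Finset.sum_le_sum (fun k _ => Finset.sum_le_sum (fun i _ => neg_one_le_ev c _ _))

def chN (w : ℕ) {n : ℕ} [NeZero n] (c0 : Config n) (pr : ℕ → ZMod n × ZMod n) (T : ℕ) : ℕ :=
  ((Finset.range T).filter (fun t => traj w c0 pr (t + 1) ≠ traj w c0 pr t)).card

lemma chN_succ [NeZero n] (c0 : Config n) (pr : ℕ → ZMod n × ZMod n) (T : ℕ) :
    chN w c0 pr (T + 1) = chN w c0 pr T +
      (if traj w c0 pr (T + 1) ≠ traj w c0 pr T then 1 else 0) := by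
  unfold chN
  rw [Finset.range_add_one, Finset.filter_insert]
  split_ifs with h
  · rw [Finset.card_insert_of_notMem (by simp)]
  · simp

lemma swapStep_eq_or (c : Config n) (p : ZMod n × ZMod n) :
    swapStep w c p = c ∨
      (¬ happy w c p.1 ∧ ¬ happy w c p.2 ∧ c p.1 ≠ c p.2 ∧ swapStep w c p = doSwap c p.1 p.2) := by
  unfold swapStep
  split_ifs with h
  · exact Or.inr ⟨h.1, h.2.1, h.2.2, rfl⟩
  · exact Or.inl rfl

lemma pot_traj (hn : 2 * w < n) [NeZero n] (c0 : Config n) (pr : ℕ → ZMod n × ZMod n) :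
    ∀ T : ℕ, pot w c0 + 4 * chN w c0 pr T ≤ pot w (traj w c0 pr T) := by
  intro T
  induction T with
  | zero => simp [show chN w c0 pr 0 = 0 from rfl, traj]
  | succ T ih =>
    rw [chN_succ]
    by_cases h : traj w c0 pr (T + 1) = traj w c0 pr T
    · rw [h, if_neg (by simp [h]), add_zero]
      exact ih
    · rw [if_pos h]
      rcases swapStep_eq_or (w := w) (traj w c0 pr T) (pr T) with h2 | ⟨h1, h2, h3, h4⟩
      · exact absurd h2 h
      · have : pot w (traj w c0 pr T) + 4 ≤ pot w (traj w c0 pr (T + 1)) := by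
          show _ ≤ pot w (swapStep w (traj w c0 pr T) (pr T))
          rw [h4]
          exact pot_swap hn h1 h2 h3
        push_cast
        push_cast at ih
        linarith

lemma chN_le (hn : 2 * w < n) [NeZero n] (c0 : Config n) (pr : ℕ → ZMod n × ZMod n) (T : ℕ) :
    chN w c0 pr T ≤ w * n := by
  have h1 := pot_traj hn c0 pr T
  have h2 := (pot_le_bound (w := w) (traj w c0 pr T)).1
  have h3 := (pot_le_bound (w := w) c0).2
  have : 4 * (chN w c0 pr T : ℤ) ≤ 2 * ((w * n : ℕ) : ℤ) := by linarith
  exact_mod_cast (by linarith : (chN w c0 pr T : ℤ) ≤ ((w * n : ℕ) : ℤ))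

lemma frozen_swapStep {c : Config n} (h : Frozen w c) (p : ZMod n × ZMod n) :
    swapStep w c p = c := if_neg (h p.1 p.2)

lemma frozen_succ {c0 : Config n} {pr : ℕ → ZMod n × ZMod n} {T : ℕ}
    (h : Frozen w (traj w c0 pr T)) : Frozen w (traj w c0 pr (T + 1)) := by
  show Frozen w (swapStep w (traj w c0 pr T) (pr T))
  rw [frozen_swapStep h]
  exact h

lemma two_change [NeZero n] {c : Config n} (hnf : ¬ Frozen w c) :
    2 ≤ ((distinctPairs n).filter (fun p => swapStep w c p ≠ c)).card := by
  classical
  simp only [Frozen, not_forall, not_not] at hnf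
  obtain ⟨i, j, h1, h2, h3⟩ := hnf
  have hij : i ≠ j := fun h => h3 (by rw [h])
  have hchange : ∀ a b : ZMod n, a ≠ b → ¬ happy w c a → ¬ happy w c b → c a ≠ c b →
      swapStep w c (a, b) ≠ c := by
    intro a b hab ha hb hcab heq
    have hs : swapStep w c (a, b) = doSwap c a b := if_pos ⟨ha, hb, hcab⟩
    apply hcab
    have : doSwap c a b a = c a := by rw [← hs, heq]
    rw [← this]
    simp [doSwap, Function.update_apply, hab]
  have m1 : (i, j) ∈ (distinctPairs n).filter (fun p => swapStep w c p ≠ c) := by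
    simp only [Finset.mem_filter, distinctPairs, Finset.mem_univ, true_and]
    exact ⟨hij, hchange i j hij h1 h2 h3⟩
  have m2 : (j, i) ∈ (distinctPairs n).filter (fun p => swapStep w c p ≠ c) := by
    simp only [Finset.mem_filter, distinctPairs, Finset.mem_univ, true_and]
    exact ⟨hij.symm, hchange j i hij.symm h2 h1 (Ne.symm h3)⟩
  calc 2 = ({(i, j), (j, i)} : Finset (ZMod n × ZMod n)).card := by
        rw [Finset.card_insert_of_notMem (by simp [hij]), Finset.card_singleton]
      _ ≤ _ := Finset.card_le_card (by
        intro x hx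
        simp only [Finset.mem_insert, Finset.mem_singleton] at hx
        rcases hx with rfl | rfl
        · exact m1
        · exact m2)

lemma nochange_card [NeZero n] {c : Config n} (hnf : ¬ Frozen w c) :
    ((distinctPairs n).filter (fun p => swapStep w c p = c)).card ≤
      (distinctPairs n).card - 2 := by
  classical
  have h := Finset.card_filter_add_card_filter_not
    (s := distinctPairs n) (p := fun p => swapStep w c p ≠ c)
  have h2 := two_change (w := w) hnf
  have : (Finset.filter (fun p => ¬ swapStep w c p ≠ c) (distinctPairs n)) =
      (Finset.filter (fun p => swapStep w c p = c) (distinctPairs n)) := by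
    apply Finset.filter_congr
    intro p _
    simp
  rw [this] at h
  omega

end PotLemmas

section Counting
variable {n w : ℕ}

def prOf {n : ℕ} {T : ℕ} (f : Fin T → ZMod n × ZMod n) : ℕ → ZMod n × ZMod n :=
  fun t => if h : t < T then f ⟨t, h⟩ else (0, 0)

lemma traj_congr {T : ℕ} (c0 : Config n) {pr pr' : ℕ → ZMod n × ZMod n}
    (h : ∀ t < T, pr t = pr' t) : ∀ s ≤ T, traj w c0 pr s = traj w c0 pr' s := by
  intro s hs
  induction s with
  | zero => rfl
  | succ s ih =>
    show swapStep w (traj w c0 pr s) (pr s) = swapStep w (traj w c0 pr' s) (pr' s)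
    rw [ih (by omega), h s (by omega)]

lemma prOf_snoc_lt {T : ℕ} (g : Fin T → ZMod n × ZMod n) (p : ZMod n × ZMod n)
    {t : ℕ} (ht : t < T) : prOf (Fin.snoc g p) t = prOf g t := by
  have h1 : t < T + 1 := by omega
  rw [prOf, prOf, dif_pos h1, dif_pos ht]
  have : (⟨t, h1⟩ : Fin (T + 1)) = Fin.castSucc ⟨t, ht⟩ := rfl
  rw [this, Fin.snoc_castSucc]

lemma prOf_snoc_last {T : ℕ} (g : Fin T → ZMod n × ZMod n) (p : ZMod n × ZMod n) :
    prOf (Fin.snoc g p) T = p := by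
  rw [prOf, dif_pos (by omega : T < T + 1)]
  have : (⟨T, by omega⟩ : Fin (T + 1)) = Fin.last T := rfl
  rw [this, Fin.snoc_last]

lemma traj_snoc {T : ℕ} [NeZero n] (c0 : Config n) (g : Fin T → ZMod n × ZMod n)
    (p : ZMod n × ZMod n) {s : ℕ} (hs : s ≤ T) :
    traj w c0 (prOf (Fin.snoc g p)) s = traj w c0 (prOf g) s :=
  traj_congr c0 (fun t ht => prOf_snoc_lt g p ht) s hs

lemma traj_snoc_succ {T : ℕ} [NeZero n] (c0 : Config n) (g : Fin T → ZMod n × ZMod n)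
    (p : ZMod n × ZMod n) :
    traj w c0 (prOf (Fin.snoc g p)) (T + 1) =
      swapStep w (traj w c0 (prOf g) T) p := by
  show swapStep w (traj w c0 (prOf (Fin.snoc g p)) T) (prOf (Fin.snoc g p) T) = _
  rw [traj_snoc c0 g p (le_refl T), prOf_snoc_last]

lemma chN_snoc {T : ℕ} [NeZero n] (c0 : Config n) (g : Fin T → ZMod n × ZMod n)
    (p : ZMod n × ZMod n) :
    chN w c0 (prOf (Fin.snoc g p)) (T + 1) = chN w c0 (prOf g) T +
      (if swapStep w (traj w c0 (prOf g) T) p ≠ traj w c0 (prOf g) T then 1 else 0) := by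
  rw [chN_succ]
  congr 1
  · unfold chN
    apply congrArg
    apply Finset.filter_congr
    intro t ht
    simp only [Finset.mem_range] at ht
    rw [traj_snoc c0 g p (by omega : t + 1 ≤ T), traj_snoc c0 g p (by omega : t ≤ T)]
  · rw [traj_snoc_succ, traj_snoc c0 g p (le_refl T)]

open Classical in
noncomputable def AA (w n : ℕ) [NeZero n] (T : ℕ) :
    Finset (Config n × (Fin T → ZMod n × ZMod n)) :=
  Finset.univ.filter (fun a => (∀ t, a.2 t ∈ distinctPairs n) ∧
    ¬ Frozen w (traj w a.1 (prOf a.2) T))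

noncomputable def VV (w n : ℕ) [NeZero n] (T : ℕ) : ℕ :=
  ∑ a ∈ AA w n T, (distinctPairs n).card ^ (w * n - chN w a.1 (prOf a.2) T)

lemma V_succ (hn : 2 * w < n) [NeZero n] (hD : 2 ≤ (distinctPairs n).card) (T : ℕ) :
    VV w n (T + 1) ≤ ((distinctPairs n).card - 1) * VV w n T := by
  classical
  set D := (distinctPairs n).card with hD'
  set M := w * n with hM
  set Φ : ((Config n × (Fin T → ZMod n × ZMod n)) × (ZMod n × ZMod n)) →
      Config n × (Fin (T + 1) → ZMod n × ZMod n) :=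
    fun yp => (yp.1.1, Fin.snoc yp.1.2 yp.2) with hΦ
  have hsub : AA w n (T + 1) ⊆ Finset.image Φ ((AA w n T) ×ˢ (distinctPairs n)) := by
    intro x hx
    simp only [AA, Finset.mem_filter, Finset.mem_univ, true_and] at hx
    obtain ⟨hP, hF⟩ := hx
    rw [Finset.mem_image]
    refine ⟨((x.1, Fin.init x.2), x.2 (Fin.last T)), ?_, ?_⟩
    · rw [Finset.mem_product]
      constructor
      · simp only [AA, Finset.mem_filter, Finset.mem_univ, true_and]
        constructor
        · intro t; exact hP _
        · intro hFr
          apply hF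
          have h1 : traj w x.1 (prOf x.2) T = traj w x.1 (prOf (Fin.init x.2)) T := by
            apply traj_congr
            · intro t ht
              have := prOf_snoc_lt (Fin.init x.2) (x.2 (Fin.last T)) ht
              rw [Fin.snoc_init_self] at this
              rw [this]
            · exact le_refl T
          have h2 : Frozen w (traj w x.1 (prOf x.2) T) := h1 ▸ hFr
          have h3 := frozen_succ (w := w) (c0 := x.1) (pr := prOf x.2) (T := T) h2
          exact h3
      · exact hP _
    · simp only [hΦ]
      rw [Fin.snoc_init_self]
  have hinj : ∀ a ∈ (AA w n T) ×ˢ (distinctPairs n), ∀ b ∈ (AA w n T) ×ˢ (distinctPairs n),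
      Φ a = Φ b → a = b := by
    intro a _ b _ hab
    simp only [hΦ, Prod.mk.injEq] at hab
    obtain ⟨h1, h2⟩ := hab
    have h3 : a.1.2 = b.1.2 := by
      have := congrArg Fin.init h2
      rwa [Fin.init_snoc, Fin.init_snoc] at this
    have h4 : a.2 = b.2 := by
      have := congrArg (fun f => f (Fin.last T)) h2
      simpa [Fin.snoc_last] using this
    exact Prod.ext (Prod.ext h1 h3) h4
  calc VV w n (T + 1) ≤ ∑ x ∈ Finset.image Φ ((AA w n T) ×ˢ (distinctPairs n)),
        D ^ (M - chN w x.1 (prOf x.2) (T + 1)) :=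
      Finset.sum_le_sum_of_subset hsub
    _ = ∑ yp ∈ (AA w n T) ×ˢ (distinctPairs n),
        D ^ (M - chN w (Φ yp).1 (prOf (Φ yp).2) (T + 1)) := Finset.sum_image hinj
    _ = ∑ y ∈ AA w n T, ∑ p ∈ distinctPairs n,
        D ^ (M - (chN w y.1 (prOf y.2) T +
          (if swapStep w (traj w y.1 (prOf y.2) T) p ≠ traj w y.1 (prOf y.2) T
            then 1 else 0))) := by
      rw [Finset.sum_product]
      refine Finset.sum_congr rfl (fun y _ => Finset.sum_congr rfl (fun p _ => ?_))
      simp only [hΦ]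
      rw [chN_snoc]
    _ ≤ ∑ y ∈ AA w n T, (D - 1) * D ^ (M - chN w y.1 (prOf y.2) T) := by
      refine Finset.sum_le_sum (fun y hy => ?_)
      set c := traj w y.1 (prOf y.2) T with hc
      set ch := chN w y.1 (prOf y.2) T with hch
      have hnf : ¬ Frozen w c := by
        simp only [AA, Finset.mem_filter] at hy
        exact hy.2.2
      have hsplit := Finset.sum_filter_add_sum_filter_not (distinctPairs n)
        (fun p => swapStep w c p = c)
        (fun p => D ^ (M - (ch + (if swapStep w c p ≠ c then 1 else 0))))
      rw [← hsplit]
      have hA : ∑ p ∈ (distinctPairs n).filter (fun p => swapStep w c p = c),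
          D ^ (M - (ch + (if swapStep w c p ≠ c then 1 else 0))) ≤ (D - 2) * D ^ (M - ch) := by
        have : ∀ p ∈ (distinctPairs n).filter (fun p => swapStep w c p = c),
            D ^ (M - (ch + (if swapStep w c p ≠ c then 1 else 0))) = D ^ (M - ch) := by
          intro p hp
          simp only [Finset.mem_filter] at hp
          rw [if_neg (by simpa using hp.2), add_zero]
        rw [Finset.sum_congr rfl this, Finset.sum_const, smul_eq_mul]
        exact Nat.mul_le_mul_right _ (nochange_card hnf)
      have hB : ∑ p ∈ (distinctPairs n).filter (fun p => ¬ swapStep w c p = c),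
          D ^ (M - (ch + (if swapStep w c p ≠ c then 1 else 0))) ≤ D ^ (M - ch) := by
        by_cases hne : ((distinctPairs n).filter (fun p => ¬ swapStep w c p = c)).Nonempty
        · obtain ⟨p0, hp0⟩ := hne
          simp only [Finset.mem_filter] at hp0
          have hchM : ch + 1 ≤ M := by
            have := chN_le hn y.1 (prOf (Fin.snoc y.2 p0)) (T + 1)
            rw [chN_snoc, ← hc, ← hch, if_pos hp0.2] at this
            exact this
          have hval : ∀ p ∈ (distinctPairs n).filter (fun p => ¬ swapStep w c p = c),
              D ^ (M - (ch + (if swapStep w c p ≠ c then 1 else 0))) = D ^ (M - ch - 1) := by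
            intro p hp
            simp only [Finset.mem_filter] at hp
            rw [if_pos hp.2]
            congr 1
          rw [Finset.sum_congr rfl hval, Finset.sum_const, smul_eq_mul]
          calc ((distinctPairs n).filter (fun p => ¬ swapStep w c p = c)).card *
                D ^ (M - ch - 1) ≤ D * D ^ (M - ch - 1) :=
              Nat.mul_le_mul_right _ (Finset.card_filter_le _ _)
            _ = D ^ (M - ch) := by
              rw [← pow_succ']
              congr 1
              omega
        · rw [Finset.not_nonempty_iff_eq_empty] at hne
          rw [hne, Finset.sum_empty]
          exact Nat.zero_le _
      calc _ ≤ (D - 2) * D ^ (M - ch) + D ^ (M - ch) := Nat.add_le_add hA hB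
        _ = (D - 1) * D ^ (M - ch) := by
          rw [← Nat.succ_mul]
          congr 1
          omega
    _ = (D - 1) * VV w n T := by rw [VV, Finset.mul_sum]

lemma V_zero [NeZero n] : VV w n 0 ≤ 2 ^ n * (distinctPairs n).card ^ (w * n) := by
  classical
  have hval : ∀ a ∈ AA w n 0,
      (distinctPairs n).card ^ (w * n - chN w a.1 (prOf a.2) 0) =
        (distinctPairs n).card ^ (w * n) := by
    intro a _
    simp [chN]
  rw [VV, Finset.sum_congr rfl hval, Finset.sum_const, smul_eq_mul]
  have hcard : (AA w n 0).card ≤ 2 ^ n := by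
    calc (AA w n 0).card ≤ (Finset.univ : Finset (Config n × (Fin 0 → ZMod n × ZMod n))).card :=
        Finset.card_le_card (Finset.filter_subset _ _)
      _ = 2 ^ n := by
        rw [Finset.card_univ, Fintype.card_prod, Fintype.card_fun]
        simp [ZMod.card]
  exact Nat.mul_le_mul_right _ hcard

lemma V_le (hn : 2 * w < n) [NeZero n] (hD : 2 ≤ (distinctPairs n).card) (T : ℕ) :
    VV w n T ≤ ((distinctPairs n).card - 1) ^ T * (2 ^ n * (distinctPairs n).card ^ (w * n)) := by
  induction T with
  | zero => simpa using V_zero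
  | succ T ih =>
    calc VV w n (T + 1) ≤ ((distinctPairs n).card - 1) * VV w n T := V_succ hn hD T
      _ ≤ ((distinctPairs n).card - 1) *
          (((distinctPairs n).card - 1) ^ T * (2 ^ n * (distinctPairs n).card ^ (w * n))) :=
        Nat.mul_le_mul_left _ ih
      _ = _ := by ring

end Counting

section MeasureAux
variable {n w : ℕ}

instance : MeasurableSingletonClass (ZMod n) :=
  ⟨fun _ => MeasurableSpace.measurableSet_top⟩

instance : DiscreteMeasurableSpace (ZMod n) :=
  ⟨fun _ => MeasurableSpace.measurableSet_top⟩

lemma uniformOn_singleton {α : Type*} [MeasurableSpace α] [MeasurableSingletonClass α]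
    [DecidableEq α] (s : Finset α) (a : α) :
    uniformOn s {a} = if a ∈ s then (s.card : ℝ≥0∞)⁻¹ else 0 := by
  rw [uniformOn, Measure.smul_apply, Measure.finset_sum_apply]
  have : ∀ b ∈ s, Measure.dirac b ({a} : Set α) = if b = a then 1 else 0 := by
    intro b _
    rw [Measure.dirac_apply' _ (measurableSet_singleton a)]
    simp [Set.indicator_apply]
  rw [Finset.sum_congr rfl this, Finset.sum_ite_eq' s a (fun _ => 1)]
  simp only [smul_eq_mul, mul_ite, mul_one, mul_zero]

instance uniformOn_finite {α : Type*} [MeasurableSpace α] (s : Finset α) :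
    IsFiniteMeasure (uniformOn s) := by
  constructor
  rw [uniformOn, Measure.smul_apply, Measure.finset_sum_apply]
  simp only [measure_univ, Finset.sum_const, smul_eq_mul, mul_one, nsmul_eq_mul]
  rcases eq_or_ne s.card 0 with h | h
  · simp [h]
  · rw [ENNReal.inv_mul_cancel (by exact_mod_cast h) (ENNReal.natCast_ne_top _)]
    exact ENNReal.one_lt_top

lemma uniformOn_univ_eq_one {α : Type*} [MeasurableSpace α] {s : Finset α}
    (hs : s.Nonempty) : uniformOn s Set.univ = 1 := by
  rw [uniformOn, Measure.smul_apply, Measure.finset_sum_apply]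
  simp only [measure_univ, Measure.dirac_apply_of_mem (Set.mem_univ _), Finset.sum_const,
    smul_eq_mul, mul_one]
  rw [nsmul_eq_mul, mul_one]
  exact ENNReal.inv_mul_cancel (by exact_mod_cast Finset.card_ne_zero.mpr hs)
    (ENNReal.natCast_ne_top _)

lemma isProb_uniformOn {α : Type*} [MeasurableSpace α] {s : Finset α} (hs : s.Nonempty) :
    IsProbabilityMeasure (uniformOn s) := ⟨uniformOn_univ_eq_one hs⟩

instance (n : ℕ) [NeZero n] : IsFiniteMeasure (pairMeasure n) := by
  unfold pairMeasure; infer_instance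

instance (n : ℕ) [NeZero n] : IsProbabilityMeasure (configMeasure n) :=
  isProb_uniformOn Finset.univ_nonempty

lemma distinctPairs_nonempty (hn : 2 ≤ n) [NeZero n] : (distinctPairs n).Nonempty := by
  haveI : Fact (1 < n) := ⟨hn⟩
  exact ⟨((0 : ZMod n), 1), by simp [distinctPairs]⟩

lemma distinctPairs_two_le (hn : 2 ≤ n) [NeZero n] : 2 ≤ (distinctPairs n).card := by
  haveI : Fact (1 < n) := ⟨hn⟩
  have h01 : ((0 : ZMod n), (1 : ZMod n)) ≠ ((1 : ZMod n), (0 : ZMod n)) := by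
    simp
  have h2 : ({((0 : ZMod n), (1 : ZMod n)), ((1 : ZMod n), (0 : ZMod n))} :
      Finset (ZMod n × ZMod n)).card = 2 := by
    rw [Finset.card_insert_of_notMem (by simp), Finset.card_singleton]
  have h3 : ({((0 : ZMod n), (1 : ZMod n)), ((1 : ZMod n), (0 : ZMod n))} :
      Finset (ZMod n × ZMod n)) ⊆ distinctPairs n := by
    intro x hx
    simp only [Finset.mem_insert, Finset.mem_singleton] at hx
    rcases hx with rfl | rfl <;> simp [distinctPairs]
  calc 2 = _ := h2.symm
    _ ≤ (distinctPairs n).card := Finset.card_le_card h3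

lemma measure_bad [NeZero n] (hw : 1 ≤ w) (hn : 2 * w < n) (T : ℕ) :
    ((configMeasure n).prod (Measure.pi fun _ : Fin T => pairMeasure n))
        {a : Config n × (Fin T → ZMod n × ZMod n) | ¬ Frozen w (traj w a.1 (prOf a.2) T)}
      ≤ ((distinctPairs n).card : ℝ≥0∞) ^ (w * n) *
          ((((distinctPairs n).card - 1 : ℕ) : ℝ≥0∞) * ((distinctPairs n).card : ℝ≥0∞)⁻¹) ^ T := by
  classical
  have hn2 : 2 ≤ n := by omega
  set D := (distinctPairs n).card with hD'
  have hD : 2 ≤ D := distinctPairs_two_le hn2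
  set M := w * n with hM
  set ν := (configMeasure n).prod (Measure.pi fun _ : Fin T => pairMeasure n) with hν
  set Bad : Set (Config n × (Fin T → ZMod n × ZMod n)) :=
    {a | ¬ Frozen w (traj w a.1 (prOf a.2) T)} with hBad
  set BadF : Finset (Config n × (Fin T → ZMod n × ZMod n)) :=
    Finset.univ.filter (fun a => a ∈ Bad) with hBadF
  have hdecomp : Bad = ⋃ a ∈ BadF, ({a} : Set _) := by
    ext x
    simp only [Set.mem_iUnion, Set.mem_singleton_iff, hBadF, Finset.mem_filter,
      Finset.mem_univ, true_and]
    constructor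
    · intro hx; exact ⟨x, hx, rfl⟩
    · rintro ⟨a, ha, rfl⟩; exact ha
  have hsing : ∀ a : Config n × (Fin T → ZMod n × ZMod n),
      ν ({a} : Set _) = (Fintype.card (Config n) : ℝ≥0∞)⁻¹ *
        ∏ t : Fin T, (if a.2 t ∈ distinctPairs n then (D : ℝ≥0∞)⁻¹ else 0) := by
    rintro ⟨c0, f⟩
    have h1 : ({(c0, f)} : Set (Config n × (Fin T → ZMod n × ZMod n))) =
        ({c0} : Set (Config n)) ×ˢ ({f} : Set (Fin T → ZMod n × ZMod n)) := by
      rw [Set.singleton_prod_singleton]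
    rw [hν, h1, Measure.prod_prod]
    congr 1
    · rw [configMeasure, uniformOn_singleton]
      simp [Finset.card_univ]
    · rw [← Set.univ_pi_singleton f, Measure.pi_pi]
      exact Finset.prod_congr rfl (fun t _ => by rw [pairMeasure, uniformOn_singleton])
  have hnuB : ν Bad = ∑ a ∈ BadF, ν ({a} : Set _) := by
    rw [hdecomp]
    refine measure_biUnion_finset ?_ (fun b _ => MeasurableSet.of_discrete)
    intro x _ y _ hxy
    simp [Function.onFun, Set.disjoint_singleton_left, hxy]
  have hsum : ∑ a ∈ BadF, ν ({a} : Set _) =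
      ∑ a ∈ AA w n T, ((Fintype.card (Config n) : ℝ≥0∞))⁻¹ * ((D : ℝ≥0∞)⁻¹) ^ T := by
    rw [← Finset.sum_filter_add_sum_filter_not BadF (fun a => ∀ t, a.2 t ∈ distinctPairs n)]
    have hz : ∑ a ∈ BadF.filter (fun a => ¬ ∀ t, a.2 t ∈ distinctPairs n),
        ν ({a} : Set _) = 0 := by
      refine Finset.sum_eq_zero (fun a ha => ?_)
      simp only [Finset.mem_filter, not_forall] at ha
      obtain ⟨t0, ht0⟩ := ha.2
      rw [hsing a]
      rw [Finset.prod_eq_zero (Finset.mem_univ t0) (by rw [if_neg ht0])]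
      exact mul_zero _
    rw [hz, add_zero]
    have hAAeq : BadF.filter (fun a => ∀ t, a.2 t ∈ distinctPairs n) = AA w n T := by
      ext a
      simp only [hBadF, AA, Finset.mem_filter, Finset.mem_univ, true_and, hBad,
        Set.mem_setOf_eq]
      tauto
    rw [hAAeq]
    refine Finset.sum_congr rfl (fun a ha => ?_)
    rw [hsing a]
    congr 1
    have hmem : ∀ t, a.2 t ∈ distinctPairs n := by
      simp only [AA, Finset.mem_filter] at ha
      exact ha.2.1
    rw [Finset.prod_congr rfl (fun t _ => if_pos (hmem t)), Finset.prod_const,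
      Finset.card_univ, Fintype.card_fin]
  have hcardC : (Fintype.card (Config n) : ℝ≥0∞) = 2 ^ n := by
    rw [Fintype.card_fun]
    simp [ZMod.card]
  have hVle : (AA w n T).card ≤ VV w n T := by
    rw [VV]
    calc (AA w n T).card = ∑ _a ∈ AA w n T, 1 := by simp
      _ ≤ _ := Finset.sum_le_sum (fun a _ => Nat.one_le_iff_ne_zero.mpr
          (pow_ne_zero _ (by omega)))
  have hVbound := V_le hn hD T
  calc ν Bad = ∑ a ∈ AA w n T, ((Fintype.card (Config n) : ℝ≥0∞))⁻¹ * ((D : ℝ≥0∞)⁻¹) ^ T := by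
        rw [hnuB, hsum]
    _ = ((AA w n T).card : ℝ≥0∞) * (((2 : ℝ≥0∞) ^ n)⁻¹ * ((D : ℝ≥0∞)⁻¹) ^ T) := by
        rw [Finset.sum_const, nsmul_eq_mul, hcardC]
    _ ≤ ((VV w n T : ℕ) : ℝ≥0∞) * (((2 : ℝ≥0∞) ^ n)⁻¹ * ((D : ℝ≥0∞)⁻¹) ^ T) := by
        gcongr <;> first | exact le_rfl | exact_mod_cast hVle
    _ ≤ (((D - 1 : ℕ) ^ T * (2 ^ n * D ^ M) : ℕ) : ℝ≥0∞) *
          (((2 : ℝ≥0∞) ^ n)⁻¹ * ((D : ℝ≥0∞)⁻¹) ^ T) := by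
        gcongr <;> first | exact le_rfl | exact_mod_cast hVbound
    _ = (D : ℝ≥0∞) ^ M * ((((D - 1 : ℕ) : ℝ≥0∞)) * ((D : ℝ≥0∞))⁻¹) ^ T *
          ((2 : ℝ≥0∞) ^ n * ((2 : ℝ≥0∞) ^ n)⁻¹) := by
        push_cast
        ring
    _ = (D : ℝ≥0∞) ^ M * ((((D - 1 : ℕ) : ℝ≥0∞)) * ((D : ℝ≥0∞))⁻¹) ^ T := by
        rw [ENNReal.mul_inv_cancel (by positivity) (ENNReal.pow_ne_top ENNReal.ofNat_ne_top), mul_one]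

end MeasureAux


/-- For every fixed window size `w`, the probability that the
segregation process on the ring of `n` nodes eventually reaches a frozen configuration
converges to `1` as `n → ∞`. -/
theorem eventually_frozen (w : ℕ) (hw : 1 ≤ w) (ε : ℝ≥0∞) (hε : 0 < ε) :
    ∃ N : ℕ, ∀ n : ℕ, N ≤ n → ∀ (hn : 2 * w < n) [NeZero n],
    ∀ (Ω : Type) (mΩ : MeasurableSpace Ω) (μ : Measure Ω),
      IsProbabilityMeasure μ →
    ∀ (init : Ω → Config n) (prop : ℕ → Ω → ZMod n × ZMod n),
      IsSchellingProcess n μ init prop →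
      1 - ε ≤ μ {ω | ∃ T : ℕ, Frozen w (traj w (init ω) (fun t => prop t ω) T)} := by
  refine ⟨0, fun n _ hn _ Ω mΩ μ hμ init prop hproc => ?_⟩
  classical
  have hn2 : 2 ≤ n := by omega
  set D := (distinctPairs n).card with hD'
  have hD : 2 ≤ D := distinctPairs_two_le hn2
  set M := w * n with hM
  set S : Set Ω := {ω | ∃ T : ℕ, Frozen w (traj w (init ω) (fun t => prop t ω) T)} with hS
  -- For each T, the complement of S is contained in the preimage of the bad set.
  set BadT : (T : ℕ) → Set (Config n × (Fin T → ZMod n × ZMod n)) :=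
    fun T => {a | ¬ Frozen w (traj w a.1 (prOf a.2) T)} with hBadT
  set F : (T : ℕ) → Ω → Config n × (Fin T → ZMod n × ZMod n) :=
    fun T ω => (init ω, fun t : Fin T => prop t ω) with hF
  have hsub : ∀ T : ℕ, Sᶜ ⊆ (F T) ⁻¹' (BadT T) := by
    intro T ω hω
    simp only [hS, Set.mem_compl_iff, Set.mem_setOf_eq, not_exists] at hω
    simp only [Set.mem_preimage, hBadT, Set.mem_setOf_eq, hF]
    have htr : traj w (init ω) (prOf (fun t : Fin T => prop t ω)) T =
        traj w (init ω) (fun t => prop t ω) T := by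
      apply traj_congr
      · intro t ht
        rw [prOf, dif_pos ht]
      · exact le_refl T
    rw [htr]
    exact hω T
  have hae : ∀ T : ℕ, AEMeasurable (F T) μ := by
    intro T
    by_contra hna
    have h0 := Measure.map_of_not_aemeasurable hna
    rw [hproc T] at h0
    haveI : IsProbabilityMeasure (pairMeasure n) := by
      rw [pairMeasure]; exact isProb_uniformOn (distinctPairs_nonempty hn2)
    have h1 : ((configMeasure n).prod (Measure.pi fun _ : Fin T => pairMeasure n))
        Set.univ = 1 := measure_univ
    rw [h0] at h1
    simp at h1
  have hbound : ∀ T : ℕ, μ Sᶜ ≤ (D : ℝ≥0∞) ^ M *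
      ((((D - 1 : ℕ) : ℝ≥0∞)) * ((D : ℝ≥0∞))⁻¹) ^ T := by
    intro T
    calc μ Sᶜ ≤ μ ((F T) ⁻¹' (BadT T)) := measure_mono (hsub T)
      _ = (Measure.map (F T) μ) (BadT T) :=
        (Measure.map_apply_of_aemeasurable (hae T) MeasurableSet.of_discrete).symm
      _ = ((configMeasure n).prod (Measure.pi fun _ : Fin T => pairMeasure n)) (BadT T) := by
        rw [hproc T]
      _ ≤ _ := measure_bad hw hn T
  have hr : ((((D - 1 : ℕ) : ℝ≥0∞)) * ((D : ℝ≥0∞))⁻¹) < 1 := by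
    have h1 : (((D - 1 : ℕ) : ℝ≥0∞)) < (D : ℝ≥0∞) := by
      exact_mod_cast (by omega : D - 1 < D)
    have h2 : ((D : ℝ≥0∞))⁻¹ ≠ 0 := by
      simp [ENNReal.inv_ne_zero]
    have h3 : ((D : ℝ≥0∞))⁻¹ ≠ ⊤ := by
      simp only [ne_eq, ENNReal.inv_eq_top]
      exact_mod_cast (by omega : D ≠ 0)
    calc (((D - 1 : ℕ) : ℝ≥0∞)) * ((D : ℝ≥0∞))⁻¹ < (D : ℝ≥0∞) * ((D : ℝ≥0∞))⁻¹ :=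
        ENNReal.mul_lt_mul_left h2 h3 h1
      _ = 1 := ENNReal.mul_inv_cancel (by exact_mod_cast (by omega : D ≠ 0))
          (ENNReal.natCast_ne_top _)
  have htend : Filter.Tendsto
      (fun T : ℕ => (D : ℝ≥0∞) ^ M * ((((D - 1 : ℕ) : ℝ≥0∞)) * ((D : ℝ≥0∞))⁻¹) ^ T)
      Filter.atTop (nhds 0) := by
    have := ENNReal.Tendsto.const_mul (a := (D : ℝ≥0∞) ^ M)
      (ENNReal.tendsto_pow_atTop_nhds_zero_of_lt_one hr)
      (Or.inr (ENNReal.pow_ne_top (ENNReal.natCast_ne_top D)))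
    simpa using this
  have hcompl : μ Sᶜ = 0 :=
    le_antisymm (ge_of_tendsto' htend hbound) zero_le
  have hge : 1 ≤ μ S := by
    have h1 : μ Set.univ ≤ μ S + μ Sᶜ := by
      rw [← Set.union_compl_self S]
      exact measure_union_le S Sᶜ
    rw [measure_univ, hcompl, add_zero] at h1
    exact h1
  calc 1 - ε ≤ 1 := tsub_le_self
    _ ≤ μ S := hge



end Schelling
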